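/- arXiv:1406.7503 — 4 statements merged into one kernel-verified Lean document; each statement's English description precedes it below -/
import Mathlib

section
/- Let 0 < p < 1, let α_1,…,α_N be positive real numbers, let u_1,…,u_N (N ≥ n+1) be unit vectors in ℝ^n not concentrated on a closed hemisphere, and let P ∈ P(u_1,…,u_N). Then there exists a unique point ξ_p(P) ∈ P such that Φ_P(ξ_p(P)) = max_{ξ∈P} Φ_P(ξ), where Φ_P(ξ) = Σ_{k=1}^N α_k (h(P,u_k) − ξ·u_k)^p; moreover, this maximizer ξ_p(P) lies in the interior of P. -/
open MeasureTheory Set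
open scoped RealInnerProductSpace

noncomputable section

/-- A polytope: convex hull of finitely many points with positive volume. -/
def IsPolytope {n : ℕ} (P : Set (EuclideanSpace ℝ (Fin n))) : Prop :=
  ∃ S : Finset (EuclideanSpace ℝ (Fin n)),
    P = convexHull ℝ (S : Set (EuclideanSpace ℝ (Fin n))) ∧ 0 < volume P

/-- Support function of a set. -/
def suppF {n : ℕ} (P : Set (EuclideanSpace ℝ (Fin n))) (u : EuclideanSpace ℝ (Fin n)) : ℝ :=
  sSup ((fun x => ⟪x, u⟫) '' P)

/-- Support set F(P,u). -/
def suppSet {n : ℕ} (P : Set (EuclideanSpace ℝ (Fin n))) (u : EuclideanSpace ℝ (Fin n)) :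
    Set (EuclideanSpace ℝ (Fin n)) :=
  {x ∈ P | ⟪x, u⟫ = suppF P u}

/-- (n-1)-dimensional Hausdorff measure of the support set F(P,u), as a real number. -/
def facetArea {n : ℕ} (P : Set (EuclideanSpace ℝ (Fin n))) (u : EuclideanSpace ℝ (Fin n)) : ℝ :=
  (MeasureTheory.Measure.hausdorffMeasure ((n : ℝ) - 1) (suppSet P u)).toReal

/-- The unit vectors u 1, ..., u N are not concentrated on a closed hemisphere. -/
def NotOnClosedHemisphere {n N : ℕ} (u : Fin N → EuclideanSpace ℝ (Fin n)) : Prop :=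
  ¬ ∃ v : EuclideanSpace ℝ (Fin n), ‖v‖ = 1 ∧ ∀ i, 0 ≤ ⟪u i, v⟫

/-- Membership in the class P(u₁,...,u_N). -/
def InPolyClass {n N : ℕ} (u : Fin N → EuclideanSpace ℝ (Fin n))
    (P : Set (EuclideanSpace ℝ (Fin n))) : Prop :=
  IsPolytope P ∧ P = ⋂ k, {x | ⟪x, u k⟫ ≤ suppF P (u k)}

/-- The functional Φ_P(ξ) = Σ α_k (h(P,u_k) - ξ·u_k)^p. -/
def Phi {n N : ℕ} (α : Fin N → ℝ) (u : Fin N → EuclideanSpace ℝ (Fin n)) (p : ℝ)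
    (P : Set (EuclideanSpace ℝ (Fin n))) (ξ : EuclideanSpace ℝ (Fin n)) : ℝ :=
  ∑ k, α k * (suppF P (u k) - ⟪ξ, u k⟫) ^ p

/-- Auxiliary limit computation: behaviour of `t ↦ (a (d - t e)^p - a d^p)/t^p` as `t → 0⁺`. -/
lemma aux_tendsto (p : ℝ) (hp0 : 0 < p) (hp1 : p < 1) (a d e : ℝ) (hd : 0 ≤ d)
    (he' : d = 0 → e < 0) :
    Filter.Tendsto (fun t : ℝ => (a * (d - t * e) ^ p - a * d ^ p) / t ^ p)
      (nhdsWithin 0 (Set.Ioi 0)) (nhds (if d = 0 then a * (-e) ^ p else 0)) := by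
  rcases eq_or_lt_of_le hd with hd0 | hdpos
  · -- active case : d = 0
    have hd0 : d = 0 := hd0.symm
    have he : 0 < -e := by simpa using he' hd0
    simp only [hd0, if_pos rfl]
    apply Filter.Tendsto.congr' _ tendsto_const_nhds
    filter_upwards [self_mem_nhdsWithin] with t ht
    have ht0 : (0:ℝ) < t := ht
    have htp : (0:ℝ) < t ^ p := Real.rpow_pos_of_pos ht0 p
    have h1 : (0 : ℝ) - t * e = t * (-e) := by ring
    rw [h1, Real.mul_rpow ht0.le he.le, Real.zero_rpow hp0.ne']
    field_simp
    simp only [if_true]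
    ring
  · -- inactive case : d > 0
    simp only [if_neg hdpos.ne']
    have h1 : HasDerivAt (fun t : ℝ => d - t * e) (-e) 0 := by
      simpa using (((hasDerivAt_id (0:ℝ)).mul_const e).const_sub d)
    have h0 : HasDerivAt (fun x : ℝ => x ^ p) (p * d ^ (p - 1)) (d - 0 * e) := by
      simpa using Real.hasDerivAt_rpow_const (x := d) (p := p) (Or.inl hdpos.ne')
    have h2 : HasDerivAt (fun t : ℝ => (d - t * e) ^ p) (p * d ^ (p - 1) * -e) 0 :=
      by have := h0.comp 0 h1; exact this
    have h3 : HasDerivAt (fun t : ℝ => a * (d - t * e) ^ p) (a * (p * d ^ (p - 1) * -e)) 0 :=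
      h2.const_mul a
    have hslope : Filter.Tendsto (slope (fun t : ℝ => a * (d - t * e) ^ p) 0)
        (nhdsWithin 0 (Set.Ioi 0)) (nhds (a * (p * d ^ (p - 1) * -e))) := by
      refine (hasDerivAt_iff_tendsto_slope.mp h3).mono_left ?_
      exact nhdsWithin_mono 0 fun x hx => ne_of_gt hx
    have hpow : Filter.Tendsto (fun t : ℝ => t ^ (1 - p)) (nhdsWithin 0 (Set.Ioi 0))
        (nhds 0) := by
      have hc := (Real.continuousAt_rpow_const 0 (1 - p) (Or.inr (by linarith))).tendsto
      rw [Real.zero_rpow (by linarith : (1:ℝ) - p ≠ 0)] at hc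
      exact hc.mono_left nhdsWithin_le_nhds
    have hmul := hslope.mul hpow
    rw [mul_zero] at hmul
    apply hmul.congr'
    filter_upwards [self_mem_nhdsWithin] with t ht
    have ht0 : (0:ℝ) < t := ht
    have htp : (0:ℝ) < t ^ p := Real.rpow_pos_of_pos ht0 p
    have hts : t ^ (1 - p) = t / t ^ p := by
      rw [Real.rpow_sub ht0, Real.rpow_one]
    rw [slope_def_field, hts]
    have h00 : d - 0 * e = d := by ring
    rw [h00]
    field_simp
    rw [sub_zero, mul_right_comm, mul_div_cancel_right₀ _ ht0.ne']

/-- Φ_P has a unique maximizer on P, lying in the interior of P (Lemma 3.2). -/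
theorem Phi_exists_unique_maximizer
    {n N : ℕ} (hn : 2 ≤ n) (hN : n + 1 ≤ N)
    (p : ℝ) (hp0 : 0 < p) (hp1 : p < 1)
    (α : Fin N → ℝ) (hα : ∀ k, 0 < α k)
    (u : Fin N → EuclideanSpace ℝ (Fin n)) (hu : ∀ k, ‖u k‖ = 1)
    (hhem : NotOnClosedHemisphere u)
    (P : Set (EuclideanSpace ℝ (Fin n))) (hP : InPolyClass u P) :
    ∃ ξ₀ : EuclideanSpace ℝ (Fin n),
      ξ₀ ∈ interior P ∧ IsMaxOn (Phi α u p P) P ξ₀ ∧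
      ∀ ξ ∈ P, IsMaxOn (Phi α u p P) P ξ → ξ = ξ₀ := by
  obtain ⟨⟨S, hSP, hvol⟩, hPcap⟩ := hP
  have hconv : Convex ℝ P := hSP ▸ convex_convexHull ℝ _
  have hcomp : IsCompact P := hSP ▸ S.finite_toSet.isCompact_convexHull ℝ
  have hne : P.Nonempty := nonempty_of_measure_ne_zero hvol.ne'
  -- every point of P satisfies all the inequalities
  have hle : ∀ x ∈ P, ∀ k, ⟪x, u k⟫ ≤ suppF P (u k) := by
    intro x hx k
    rw [hPcap] at hx
    exact mem_iInter.mp hx k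
  -- continuity of Phi
  have hcont : Continuous (Phi α u p P) := by
    unfold Phi
    refine continuous_finset_sum _ fun k _ => continuous_const.mul ?_
    exact (continuous_const.sub (continuous_id.inner continuous_const)).rpow_const
      fun x => Or.inr hp0.le
  obtain ⟨ξ₀, hξ₀P, hmax⟩ := hcomp.exists_isMaxOn hne hcont.continuousOn
  -- the u's "separate points"
  have hspan : ∀ x y : EuclideanSpace ℝ (Fin n), x ≠ y → ∃ k, ⟪x, u k⟫ ≠ ⟪y, u k⟫ := by
    intro x y hxy
    by_contra h
    push_neg at h
    have hxy0 : x - y ≠ 0 := sub_ne_zero.mpr hxy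
    refine hhem ⟨‖x - y‖⁻¹ • (x - y), ?_, ?_⟩
    · rw [norm_smul, norm_inv, norm_norm, inv_mul_cancel₀ (norm_ne_zero_iff.mpr hxy0)]
    · intro i
      have h0 : ⟪x - y, u i⟫ = 0 := by rw [inner_sub_left, h i, sub_self]
      rw [real_inner_smul_right, real_inner_comm, h0, mul_zero]
  -- strict concavity
  have hg := Real.strictConcaveOn_rpow hp0 hp1
  have hconc : StrictConcaveOn ℝ P (Phi α u p P) := by
    refine ⟨hconv, fun x hx y hy hxy a b ha hb hab => ?_⟩
    obtain ⟨k₀, hk₀⟩ := hspan x y hxy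
    have hx' : ∀ k, (0:ℝ) ≤ suppF P (u k) - ⟪x, u k⟫ := fun k => sub_nonneg.mpr (hle x hx k)
    have hy' : ∀ k, (0:ℝ) ≤ suppF P (u k) - ⟪y, u k⟫ := fun k => sub_nonneg.mpr (hle y hy k)
    have hbase : ∀ k, suppF P (u k) - ⟪a • x + b • y, u k⟫
        = a * (suppF P (u k) - ⟪x, u k⟫) + b * (suppF P (u k) - ⟪y, u k⟫) := by
      intro k
      rw [inner_add_left, real_inner_smul_left, real_inner_smul_left]
      linear_combination (-(suppF P (u k))) * hab
    have hterm : ∀ k, a * (α k * (suppF P (u k) - ⟪x, u k⟫) ^ p)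
        + b * (α k * (suppF P (u k) - ⟪y, u k⟫) ^ p)
        ≤ α k * (suppF P (u k) - ⟪a • x + b • y, u k⟫) ^ p := by
      intro k
      rw [hbase k]
      rcases eq_or_ne (suppF P (u k) - ⟪x, u k⟫) (suppF P (u k) - ⟪y, u k⟫) with hXY | hXY
      · rw [hXY]
        have h1 : a * (suppF P (u k) - ⟪y, u k⟫) + b * (suppF P (u k) - ⟪y, u k⟫)
            = suppF P (u k) - ⟪y, u k⟫ := by rw [← add_mul, hab, one_mul]
        rw [h1]
        exact le_of_eq (by linear_combination (α k * (suppF P (u k) - ⟪y, u k⟫) ^ p) * hab)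
      · have h2 := hg.2 (hx' k) (hy' k) hXY ha hb hab
        simp only [smul_eq_mul] at h2
        nlinarith [hα k]
    have hstrict : a * (α k₀ * (suppF P (u k₀) - ⟪x, u k₀⟫) ^ p)
        + b * (α k₀ * (suppF P (u k₀) - ⟪y, u k₀⟫) ^ p)
        < α k₀ * (suppF P (u k₀) - ⟪a • x + b • y, u k₀⟫) ^ p := by
      rw [hbase k₀]
      have hXY : (suppF P (u k₀) - ⟪x, u k₀⟫) ≠ (suppF P (u k₀) - ⟪y, u k₀⟫) := by
        intro h; exact hk₀ (by linarith)
      have h2 := hg.2 (hx' k₀) (hy' k₀) hXY ha hb hab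
      simp only [smul_eq_mul] at h2
      nlinarith [hα k₀]
    unfold Phi
    rw [smul_eq_mul, smul_eq_mul, Finset.mul_sum, Finset.mul_sum, ← Finset.sum_add_distrib]
    exact Finset.sum_lt_sum (fun k _ => hterm k) ⟨k₀, Finset.mem_univ k₀, hstrict⟩
  -- nonempty interior
  have hint : (interior P).Nonempty := by
    by_contra h
    rw [not_nonempty_iff_eq_empty] at h
    have hspan' : affineSpan ℝ P ≠ ⊤ := by
      intro htop
      have h2 := hconv.interior_nonempty_iff_affineSpan_eq_top.mpr htop
      rw [h] at h2
      exact h2.ne_empty rfl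
    have h0 : volume P = 0 :=
      measure_mono_null (subset_affineSpan ℝ P)
        (Measure.addHaar_affineSubspace volume _ hspan')
    exact absurd h0 hvol.ne'
  -- interior points satisfy strict inequalities
  have hintlt : ∀ z ∈ interior P, ∀ k, ⟪z, u k⟫ < suppF P (u k) := by
    intro z hz k
    obtain ⟨ε, hε, hball⟩ := Metric.isOpen_iff.mp isOpen_interior z hz
    have hmem : z + (ε/2) • u k ∈ P := by
      apply interior_subset
      apply hball
      rw [Metric.mem_ball, dist_eq_norm, add_sub_cancel_left, norm_smul, hu k]
      rw [Real.norm_eq_abs, abs_of_pos (half_pos hε), mul_one]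
      linarith
    have h1 := hle _ hmem k
    rw [inner_add_left, real_inner_smul_left, real_inner_self_eq_norm_sq, hu k] at h1
    nlinarith
  -- boundary points have an active constraint
  have hactive : ∀ ξ ∈ P, ξ ∉ interior P → ∃ k, ⟪ξ, u k⟫ = suppF P (u k) := by
    intro ξ hξ hnotin
    by_contra h
    push_neg at h
    have hlt : ∀ k, ⟪ξ, u k⟫ < suppF P (u k) := fun k => lt_of_le_of_ne (hle ξ hξ k) (h k)
    refine hnotin (mem_interior.mpr ⟨⋂ k, {x | ⟪x, u k⟫ < suppF P (u k)}, ?_, ?_, ?_⟩)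
    · intro w hw
      rw [hPcap]
      refine mem_iInter.mpr fun k => ?_
      have hwk : ⟪w, u k⟫ < suppF P (u k) := mem_iInter.mp hw k
      exact mem_setOf.mpr hwk.le
    · exact isOpen_iInter_of_finite fun k =>
        isOpen_lt (continuous_id.inner continuous_const) continuous_const
    · exact mem_iInter.mpr hlt
  -- any maximizer lies in the interior
  have hinterior : ∀ ξ ∈ P, IsMaxOn (Phi α u p P) P ξ → ξ ∈ interior P := by
    intro ξ hξ hmaxξ
    by_contra hnot
    obtain ⟨k₀, hk₀⟩ := hactive ξ hξ hnot
    obtain ⟨z, hz⟩ := hint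
    set d : Fin N → ℝ := fun k => suppF P (u k) - ⟪ξ, u k⟫ with hd
    set e : Fin N → ℝ := fun k => ⟪z, u k⟫ - ⟪ξ, u k⟫ with he
    have hd0 : ∀ k, 0 ≤ d k := fun k => sub_nonneg.mpr (hle ξ hξ k)
    have hde : ∀ k, d k = 0 → e k < 0 := by
      intro k hk
      have h1 : ⟪ξ, u k⟫ = suppF P (u k) := by
        have := hk
        simp only [hd, sub_eq_zero] at this
        linarith [this]
      have h2 := hintlt z hz k
      simp only [he]
      linarith
    have hPhit : ∀ t : ℝ, Phi α u p P (ξ + t • (z - ξ)) = ∑ k, α k * (d k - t * e k) ^ p := by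
      intro t
      unfold Phi
      refine Finset.sum_congr rfl fun k _ => ?_
      congr 2
      rw [inner_add_left, real_inner_smul_left, inner_sub_left]
      simp only [hd, he]
      ring
    have hPhi0 : Phi α u p P ξ = ∑ k, α k * (d k) ^ p := by
      have h00 := hPhit 0
      simpa using h00
    set L : ℝ := ∑ k, (if d k = 0 then α k * (-e k) ^ p else 0) with hL
    have hLpos : 0 < L := by
      refine Finset.sum_pos' (fun k _ => ?_) ⟨k₀, Finset.mem_univ k₀, ?_⟩
      · split_ifs with hk
        · exact le_of_lt (mul_pos (hα k) (Real.rpow_pos_of_pos (by linarith [hde k hk]) p))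
        · exact le_refl 0
      · have hk : d k₀ = 0 := by simp only [hd]; rw [hk₀, sub_self]
        rw [if_pos hk]
        exact mul_pos (hα k₀) (Real.rpow_pos_of_pos (by linarith [hde k₀ hk]) p)
    have htend : Filter.Tendsto
        (fun t : ℝ => (Phi α u p P (ξ + t • (z - ξ)) - Phi α u p P ξ) / t ^ p)
        (nhdsWithin 0 (Set.Ioi 0)) (nhds L) := by
      refine (Filter.Tendsto.congr (fun t => ?_)
        (tendsto_finset_sum Finset.univ fun k _ =>
          aux_tendsto p hp0 hp1 (α k) (d k) (e k) (hd0 k) (hde k)))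
      rw [hPhit t, hPhi0, ← Finset.sum_sub_distrib, Finset.sum_div]
    have hev1 := htend.eventually (eventually_gt_nhds hLpos)
    have hev2 : ∀ᶠ t : ℝ in nhdsWithin 0 (Set.Ioi 0), t < 1 :=
      nhdsWithin_le_nhds (eventually_lt_nhds one_pos)
    have hev3 : ∀ᶠ t : ℝ in nhdsWithin 0 (Set.Ioi 0), t ∈ Set.Ioi (0:ℝ) :=
      self_mem_nhdsWithin
    obtain ⟨t, ⟨ht1, ht2⟩, ht3⟩ := ((hev1.and hev2).and hev3).exists
    have ht0 : (0:ℝ) < t := ht3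
    have htp : 0 < t ^ p := Real.rpow_pos_of_pos ht0 p
    have hlt : Phi α u p P ξ < Phi α u p P (ξ + t • (z - ξ)) := by
      have h5 := mul_pos ht1 htp
      rw [div_mul_cancel₀ _ htp.ne'] at h5
      linarith
    have hmem : ξ + t • (z - ξ) ∈ P := by
      have h6 := hconv hξ (interior_subset hz) (by linarith : (0:ℝ) ≤ 1 - t) ht0.le
        (by ring : (1 - t) + t = 1)
      have h7 : (1 - t) • ξ + t • z = ξ + t • (z - ξ) := by
        rw [smul_sub, sub_smul, one_smul]
        abel
      rwa [h7] at h6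
    exact absurd (hmaxξ hmem) (not_le.mpr hlt)
  exact ⟨ξ₀, hinterior ξ₀ hξ₀P hmax, hmax,
    fun ξ hξ hm => hconc.eq_of_isMaxOn hm hmax hξ hξ₀P⟩
end
end

section
/- Let 0 < p < 1, let α_1,…,α_N be positive real numbers, and let u_1,…,u_N (N ≥ n+1) be unit vectors in ℝ^n not concentrated on a closed hemisphere. Suppose P_i ∈ P(u_1,…,u_N) is a sequence of polytopes converging in Hausdorff distance to a polytope P (so that P ∈ P(u_1,…,u_N)). Then ξ_p(P_i) → ξ_p(P) and Φ_{P_i}(ξ_p(P_i)) → Φ_P(ξ_p(P)) as i → ∞. -/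
open MeasureTheory Set
open scoped RealInnerProductSpace

noncomputable section

/- ### Auxiliary lemmas -/

lemma inner_le_suppF {n : ℕ} {P : Set (EuclideanSpace ℝ (Fin n))} (hP : IsCompact P)
    {x : EuclideanSpace ℝ (Fin n)} (hx : x ∈ P) (u : EuclideanSpace ℝ (Fin n)) :
    ⟪x, u⟫ ≤ suppF P u :=
  le_csSup ((hP.image (continuous_id.inner continuous_const)).bddAbove)
    (Set.mem_image_of_mem _ hx)

lemma suppF_sub_le {n : ℕ} {P Q : Set (EuclideanSpace ℝ (Fin n))}
    (hPc : IsCompact P) (hQc : IsCompact Q) (hPne : P.Nonempty) (hQne : Q.Nonempty)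
    {u : EuclideanSpace ℝ (Fin n)} (hu : ‖u‖ = 1) :
    suppF P u - suppF Q u ≤ Metric.hausdorffDist P Q := by
  rw [sub_le_iff_le_add]
  apply csSup_le (hPne.image _)
  rintro _ ⟨x, hx, rfl⟩
  have fin : EMetric.hausdorffEdist P Q ≠ ⊤ :=
    Metric.hausdorffEdist_ne_top_of_nonempty_of_bounded hPne hQne hPc.isBounded hQc.isBounded
  obtain ⟨y, hy, hdy⟩ := hQc.exists_infDist_eq_dist hQne x
  have h1 : dist x y ≤ Metric.hausdorffDist P Q := by
    rw [← hdy]; exact Metric.infDist_le_hausdorffDist_of_mem hx fin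
  have h2 : ⟪x, u⟫ - ⟪y, u⟫ ≤ dist x y := by
    have h3 : ⟪x - y, u⟫ ≤ ‖x - y‖ * ‖u‖ := real_inner_le_norm _ _
    rw [inner_sub_left, hu, mul_one, ← dist_eq_norm] at h3
    exact h3
  have h4 : ⟪y, u⟫ ≤ suppF Q u := inner_le_suppF hQc hy u
  linarith

lemma isPolytope_facts {n : ℕ} {P : Set (EuclideanSpace ℝ (Fin n))} (h : IsPolytope P) :
    IsCompact P ∧ Convex ℝ P ∧ P.Nonempty := by
  obtain ⟨S, rfl, hvol⟩ := h
  exact ⟨S.finite_toSet.isCompact_convexHull ℝ, convex_convexHull ℝ _,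
    nonempty_of_measure_ne_zero hvol.ne'⟩

/-- Continuity of the maximizer ξ_p and of the maximal value of Φ under
Hausdorff convergence of polytopes (Lemma 3.3). -/
theorem Phi_maximizer_continuous
    {n N : ℕ} (hn : 2 ≤ n) (hN : n + 1 ≤ N)
    (p : ℝ) (hp0 : 0 < p) (hp1 : p < 1)
    (α : Fin N → ℝ) (hα : ∀ k, 0 < α k)
    (u : Fin N → EuclideanSpace ℝ (Fin n)) (hu : ∀ k, ‖u k‖ = 1)
    (hhem : NotOnClosedHemisphere u)
    (P : ℕ → Set (EuclideanSpace ℝ (Fin n))) (hP : ∀ i, InPolyClass u (P i))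
    (P₀ : Set (EuclideanSpace ℝ (Fin n))) (hP₀ : InPolyClass u P₀)
    (hconv : Filter.Tendsto (fun i => Metric.hausdorffDist (P i) P₀)
      Filter.atTop (nhds 0))
    (ξ : ℕ → EuclideanSpace ℝ (Fin n))
    (hξmem : ∀ i, ξ i ∈ P i) (hξmax : ∀ i, IsMaxOn (Phi α u p (P i)) (P i) (ξ i))
    (ξ₀ : EuclideanSpace ℝ (Fin n))
    (hξ₀mem : ξ₀ ∈ P₀) (hξ₀max : IsMaxOn (Phi α u p P₀) P₀ ξ₀) :
    Filter.Tendsto ξ Filter.atTop (nhds ξ₀) ∧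
    Filter.Tendsto (fun i => Phi α u p (P i) (ξ i)) Filter.atTop
      (nhds (Phi α u p P₀ ξ₀)) := by
  classical
  open Filter Metric in
  obtain ⟨hP₀c, hP₀conv, hP₀ne⟩ := isPolytope_facts hP₀.1
  have hPc : ∀ i, IsCompact (P i) := fun i => (isPolytope_facts (hP i).1).1
  have hPne : ∀ i, (P i).Nonempty := fun i => (isPolytope_facts (hP i).1).2.2
  have hfin : ∀ i, EMetric.hausdorffEdist (P i) P₀ ≠ ⊤ := fun i =>
    Metric.hausdorffEdist_ne_top_of_nonempty_of_bounded (hPne i) hP₀ne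
      (hPc i).isBounded hP₀c.isBounded
  -- convergence of support functions
  have hsupp : ∀ k, Filter.Tendsto (fun i => suppF (P i) (u k)) Filter.atTop
      (nhds (suppF P₀ (u k))) := by
    intro k
    rw [tendsto_iff_dist_tendsto_zero]
    refine squeeze_zero (fun i => dist_nonneg) (fun i => ?_) hconv
    rw [Real.dist_eq, abs_sub_le_iff]
    constructor
    · exact suppF_sub_le (hPc i) hP₀c (hPne i) hP₀ne (hu k)
    · rw [Metric.hausdorffDist_comm]
      exact suppF_sub_le hP₀c (hPc i) hP₀ne (hPne i) (hu k)
  -- joint continuity of Phi along subsequences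
  have PhiCont : ∀ (φ : ℕ → ℕ), Filter.Tendsto φ Filter.atTop Filter.atTop →
      ∀ (ζ : ℕ → EuclideanSpace ℝ (Fin n)) (z : EuclideanSpace ℝ (Fin n)),
      Filter.Tendsto ζ Filter.atTop (nhds z) →
      Filter.Tendsto (fun j => Phi α u p (P (φ j)) (ζ j)) Filter.atTop
        (nhds (Phi α u p P₀ z)) := by
    intro φ hφ ζ z hζ
    unfold Phi
    refine tendsto_finset_sum _ fun k _ => Filter.Tendsto.const_mul _ ?_
    have h1 : Filter.Tendsto (fun j => suppF (P (φ j)) (u k) - ⟪ζ j, u k⟫) Filter.atTop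
        (nhds (suppF P₀ (u k) - ⟪z, u k⟫)) :=
      Filter.Tendsto.sub ((hsupp k).comp hφ)
        (((continuous_id.inner continuous_const).tendsto z).comp hζ)
    exact (Real.continuousAt_rpow_const _ p (Or.inr hp0.le)).tendsto.comp h1
  -- boundedness
  obtain ⟨R, hR⟩ := hP₀c.isBounded.subset_closedBall (0 : EuclideanSpace ℝ (Fin n))
  obtain ⟨M, hM⟩ := hconv.bddAbove_range
  have hMd : ∀ i, Metric.hausdorffDist (P i) P₀ ≤ M := fun i =>
    hM (Set.mem_range_self i)
  have hξball : ∀ i, ξ i ∈ Metric.closedBall (0 : EuclideanSpace ℝ (Fin n)) (M + R) := by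
    intro i
    obtain ⟨y, hy, hdy⟩ := hP₀c.exists_infDist_eq_dist hP₀ne (ξ i)
    have h1 : dist (ξ i) y ≤ M := by
      rw [← hdy]
      exact le_trans (Metric.infDist_le_hausdorffDist_of_mem (hξmem i) (hfin i)) (hMd i)
    have h2 : dist y (0 : EuclideanSpace ℝ (Fin n)) ≤ R := hR hy
    have := dist_triangle (ξ i) y (0 : EuclideanSpace ℝ (Fin n))
    rw [Metric.mem_closedBall]
    linarith
  -- uniqueness of maximizer on P₀
  have huniq : ∀ η ∈ P₀, IsMaxOn (Phi α u p P₀) P₀ η → η = ξ₀ := by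
    intro η hη hηmax
    by_contra hne
    have hk : ∃ k, ⟪η, u k⟫ ≠ ⟪ξ₀, u k⟫ := by
      by_contra hcon
      push_neg at hcon
      refine hhem ⟨‖η - ξ₀‖⁻¹ • (η - ξ₀), ?_, ?_⟩
      · rw [norm_smul, norm_inv, norm_norm,
          inv_mul_cancel₀ (norm_ne_zero_iff.2 (sub_ne_zero.2 hne))]
      · intro i
        have h0 : ⟪u i, η - ξ₀⟫ = 0 := by
          rw [inner_sub_right, show ⟪u i, η⟫ = ⟪η, u i⟫ from real_inner_comm _ _,
            show ⟪u i, ξ₀⟫ = ⟪ξ₀, u i⟫ from real_inner_comm _ _, hcon i, sub_self]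
        rw [real_inner_smul_right, h0, mul_zero]
    obtain ⟨k₀, hk₀⟩ := hk
    set A : Fin N → ℝ := fun k => suppF P₀ (u k) - ⟪η, u k⟫ with hA
    set B : Fin N → ℝ := fun k => suppF P₀ (u k) - ⟪ξ₀, u k⟫ with hB
    have hA0 : ∀ k, 0 ≤ A k := fun k => sub_nonneg.2 (inner_le_suppF hP₀c hη (u k))
    have hB0 : ∀ k, 0 ≤ B k := fun k => sub_nonneg.2 (inner_le_suppF hP₀c hξ₀mem (u k))
    set m := (1/2 : ℝ) • η + (1/2 : ℝ) • ξ₀ with hm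
    have hmP : m ∈ P₀ := hP₀conv hη hξ₀mem (by norm_num) (by norm_num) (by norm_num)
    have hmid : ∀ k, suppF P₀ (u k) - ⟪m, u k⟫ = (1/2) * A k + (1/2) * B k := by
      intro k
      rw [hm, inner_add_left, real_inner_smul_left, real_inner_smul_left, hA, hB]
      ring
    have hval : Phi α u p P₀ η = Phi α u p P₀ ξ₀ :=
      le_antisymm (hξ₀max hη) (hηmax hξ₀mem)
    have hAB : A k₀ ≠ B k₀ := by
      simp only [hA, hB]
      intro hcon
      exact hk₀ (by linarith)
    have hconc : ∀ k, α k * ((1/2) * (A k) ^ p + (1/2) * (B k) ^ p)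
        ≤ α k * ((1/2) * A k + (1/2) * B k) ^ p := by
      intro k
      refine mul_le_mul_of_nonneg_left ?_ (hα k).le
      have := (Real.concaveOn_rpow hp0.le hp1.le).2 (Set.mem_Ici.2 (hA0 k))
        (Set.mem_Ici.2 (hB0 k)) (by norm_num : (0:ℝ) ≤ 1/2) (by norm_num : (0:ℝ) ≤ 1/2)
        (by norm_num)
      simpa [smul_eq_mul] using this
    have hconcs : α k₀ * ((1/2) * (A k₀) ^ p + (1/2) * (B k₀) ^ p)
        < α k₀ * ((1/2) * A k₀ + (1/2) * B k₀) ^ p := by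
      refine mul_lt_mul_of_pos_left ?_ (hα k₀)
      have := (Real.strictConcaveOn_rpow hp0 hp1).2 (Set.mem_Ici.2 (hA0 k₀))
        (Set.mem_Ici.2 (hB0 k₀)) hAB (by norm_num : (0:ℝ) < 1/2)
        (by norm_num : (0:ℝ) < 1/2) (by norm_num)
      simpa [smul_eq_mul] using this
    have hsum : Phi α u p P₀ ξ₀ = ∑ k, α k * ((1/2) * (A k) ^ p + (1/2) * (B k) ^ p) := by
      have h1 : Phi α u p P₀ ξ₀ = (1/2) * Phi α u p P₀ η + (1/2) * Phi α u p P₀ ξ₀ := by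
        rw [hval]; ring
      rw [h1]
      unfold Phi
      rw [Finset.mul_sum, Finset.mul_sum, ← Finset.sum_add_distrib]
      exact Finset.sum_congr rfl fun k _ => by rw [hA, hB]; ring
    have hlt : Phi α u p P₀ ξ₀ < Phi α u p P₀ m := by
      rw [hsum]
      have : Phi α u p P₀ m = ∑ k, α k * ((1/2) * A k + (1/2) * B k) ^ p := by
        unfold Phi
        exact Finset.sum_congr rfl fun k _ => by rw [hmid k]
      rw [this]
      exact Finset.sum_lt_sum (fun k _ => hconc k) ⟨k₀, Finset.mem_univ _, hconcs⟩
    exact absurd (hξ₀max hmP) (not_le.2 hlt)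
  -- main convergence of maximizers
  have hmain : Filter.Tendsto ξ Filter.atTop (nhds ξ₀) := by
    apply Filter.tendsto_of_subseq_tendsto
    intro ns hns
    obtain ⟨η, hηball, ms, hms, hlim⟩ :=
      (isCompact_closedBall (0 : EuclideanSpace ℝ (Fin n)) (M + R)).tendsto_subseq
        (fun j => hξball (ns j))
    set φ : ℕ → ℕ := fun j => ns (ms j) with hφdef
    have hφ : Filter.Tendsto φ Filter.atTop Filter.atTop := hns.comp hms.tendsto_atTop
    have hlim' : Filter.Tendsto (fun j => ξ (φ j)) Filter.atTop (nhds η) := hlim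
    -- η ∈ P₀
    have hinf : Filter.Tendsto (fun j => Metric.infDist (ξ (φ j)) P₀) Filter.atTop
        (nhds (Metric.infDist η P₀)) :=
      ((Metric.continuous_infDist_pt P₀).tendsto η).comp hlim'
    have hle : ∀ j, Metric.infDist (ξ (φ j)) P₀ ≤ Metric.hausdorffDist (P (φ j)) P₀ :=
      fun j => Metric.infDist_le_hausdorffDist_of_mem (hξmem _) (hfin _)
    have h0 : Metric.infDist η P₀ ≤ 0 :=
      le_of_tendsto_of_tendsto' hinf (hconv.comp hφ) hle
    have hηP₀ : η ∈ P₀ := (hP₀c.isClosed.mem_iff_infDist_zero hP₀ne).2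
      (le_antisymm h0 Metric.infDist_nonneg)
    -- η is a maximizer on P₀
    have hηmax : IsMaxOn (Phi α u p P₀) P₀ η := by
      intro y hy
      have hyd : ∀ i, ∃ z ∈ P i, dist y z ≤ Metric.hausdorffDist (P i) P₀ := by
        intro i
        obtain ⟨z, hz, hdz⟩ := (hPc i).exists_infDist_eq_dist (hPne i) y
        refine ⟨z, hz, ?_⟩
        rw [← hdz, ← Metric.hausdorffDist_comm]
        exact Metric.infDist_le_hausdorffDist_of_mem hy
          (by rw [EMetric.hausdorffEdist_comm]; exact hfin i)
      choose z hzmem hzd using hyd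
      have hz_tendsto : Filter.Tendsto (fun j => z (φ j)) Filter.atTop (nhds y) := by
        rw [tendsto_iff_dist_tendsto_zero]
        refine squeeze_zero (fun j => dist_nonneg) (fun j => ?_) (hconv.comp hφ)
        rw [dist_comm]; exact hzd (φ j)
      have h1 := PhiCont φ hφ (fun j => z (φ j)) y hz_tendsto
      have h2 := PhiCont φ hφ (fun j => ξ (φ j)) η hlim'
      exact le_of_tendsto_of_tendsto' h1 h2 fun j => hξmax (φ j) (hzmem (φ j))
    have hηeq : η = ξ₀ := huniq η hηP₀ hηmax
    exact ⟨ms, hηeq ▸ hlim⟩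
  exact ⟨hmain, PhiCont id Filter.tendsto_id ξ ξ₀ hmain⟩
end
end

section
/- Let p > 0, let α_1,…,α_N be positive real numbers, and let u_1,…,u_N (N ≥ n+1) be unit vectors in ℝ^n not concentrated on a closed hemisphere. Suppose P_k ∈ P(u_1,…,u_N) is a sequence of polytopes each containing the origin, and suppose the circumradii R(P_k) = max{|x| : x ∈ P_k} are not bounded. Then the sequence Σ_{i=1}^N α_i h(P_k,u_i)^p is not bounded. -/
open MeasureTheory Set
open scoped RealInnerProductSpace

noncomputable section

/-- The circumradius R(P) = max{|x| : x ∈ P}. -/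
def circumRadius {n : ℕ} (P : Set (EuclideanSpace ℝ (Fin n))) : ℝ :=
  sSup ((fun x => ‖x‖) '' P)

lemma exists_pos_inner_const {n N : ℕ} (hn : 2 ≤ n) (hN : 1 ≤ N)
    (u : Fin N → EuclideanSpace ℝ (Fin n)) (hhem : NotOnClosedHemisphere u) :
    ∃ c > 0, ∀ x : EuclideanSpace ℝ (Fin n), ∃ i, c * ‖x‖ ≤ ⟪x, u i⟫ := by
  haveI : Nonempty (Fin N) := ⟨⟨0, by omega⟩⟩
  haveI : Nonempty (Fin n) := ⟨⟨0, by omega⟩⟩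
  have hne : (Finset.univ : Finset (Fin N)).Nonempty := Finset.univ_nonempty
  set f : EuclideanSpace ℝ (Fin n) → ℝ :=
    fun x => Finset.univ.sup' hne (fun i => ⟪x, u i⟫) with hf
  have hfc : Continuous f :=
    Continuous.finset_sup'_apply hne (fun i _ => (continuous_id.inner continuous_const))
  have h1 : IsCompact (Metric.sphere (0 : EuclideanSpace ℝ (Fin n)) 1) := isCompact_sphere 0 1
  have h2 : (Metric.sphere (0 : EuclideanSpace ℝ (Fin n)) 1).Nonempty :=
    NormedSpace.sphere_nonempty.2 zero_le_one
  obtain ⟨v, hv, hmin⟩ := h1.exists_isMinOn h2 hfc.continuousOn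
  have hvn : ‖v‖ = 1 := mem_sphere_zero_iff_norm.1 hv
  have hc : 0 < f v := by
    by_contra h
    push_neg at h
    refine hhem ⟨-v, by rw [norm_neg, hvn], fun i => ?_⟩
    have : ⟪v, u i⟫ ≤ f v := Finset.le_sup' (fun j => ⟪v, u j⟫) (Finset.mem_univ i)
    rw [inner_neg_right, real_inner_comm]
    linarith
  refine ⟨f v, hc, fun x => ?_⟩
  rcases eq_or_ne x 0 with rfl | hx
  · exact ⟨Classical.arbitrary _, by simp⟩
  · have hxn : ‖x‖ ≠ 0 := norm_ne_zero_iff.2 hx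
    have hy : (‖x‖⁻¹ • x) ∈ Metric.sphere (0 : EuclideanSpace ℝ (Fin n)) 1 := by
      rw [mem_sphere_zero_iff_norm, norm_smul, norm_inv, norm_norm, inv_mul_cancel₀ hxn]
    have := hmin hy
    obtain ⟨i, _, hi⟩ := Finset.exists_mem_eq_sup' hne (fun i => ⟪(‖x‖⁻¹ • x), u i⟫)
    refine ⟨i, ?_⟩
    have h3 : f v ≤ ⟪(‖x‖⁻¹ • x), u i⟫ := by
      calc f v ≤ f (‖x‖⁻¹ • x) := this
        _ = ⟪(‖x‖⁻¹ • x), u i⟫ := hi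
    rw [real_inner_smul_left] at h3
    have hxp : 0 < ‖x‖ := lt_of_le_of_ne (norm_nonneg x) (Ne.symm hxn)
    calc f v * ‖x‖ ≤ (‖x‖⁻¹ * ⟪x, u i⟫) * ‖x‖ := by nlinarith
      _ = ⟪x, u i⟫ := by field_simp


/-- If the circumradii of polytopes P_k (containing the origin) are unbounded,
then Σ α_i h(P_k,u_i)^p is unbounded (Lemma 3.4). -/
theorem sum_suppF_pow_unbounded_of_circumRadius_unbounded
    {n N : ℕ} (hn : 2 ≤ n) (hN : n + 1 ≤ N)
    (p : ℝ) (hp0 : 0 < p)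
    (α : Fin N → ℝ) (hα : ∀ i, 0 < α i)
    (u : Fin N → EuclideanSpace ℝ (Fin n)) (hu : ∀ i, ‖u i‖ = 1)
    (hhem : NotOnClosedHemisphere u)
    (P : ℕ → Set (EuclideanSpace ℝ (Fin n))) (hP : ∀ k, InPolyClass u (P k))
    (ho : ∀ k, (0 : EuclideanSpace ℝ (Fin n)) ∈ P k)
    (hR : ¬ BddAbove (Set.range fun k => circumRadius (P k))) :
    ¬ BddAbove (Set.range fun k => ∑ i, α i * (suppF (P k) (u i)) ^ p) := by
  haveI : Nonempty (Fin N) := ⟨⟨0, by omega⟩⟩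
  have hne : (Finset.univ : Finset (Fin N)).Nonempty := Finset.univ_nonempty
  obtain ⟨c, hc, hcx⟩ := exists_pos_inner_const hn (by omega) u hhem
  -- compactness of each P k
  have hcomp : ∀ k, IsCompact (P k) := by
    intro k
    obtain ⟨⟨S, hS, _⟩, _⟩ := hP k
    rw [hS]
    exact (S : Set (EuclideanSpace ℝ (Fin n))).toFinite.isCompact_convexHull ℝ
  -- support function bounds
  have hsupp_le : ∀ k (x : EuclideanSpace ℝ (Fin n)), x ∈ P k → ∀ i, ⟪x, u i⟫ ≤ suppF (P k) (u i) := by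
    intro k x hx i
    exact le_csSup ((hcomp k).image (continuous_id.inner continuous_const)).bddAbove ⟨x, hx, rfl⟩
  have hsupp_nonneg : ∀ k i, 0 ≤ suppF (P k) (u i) := by
    intro k i
    have := hsupp_le k 0 (ho k) i
    simpa using this
  -- sums are nonneg
  have hterm : ∀ k i, 0 ≤ α i * (suppF (P k) (u i)) ^ p := fun k i =>
    mul_nonneg (hα i).le (Real.rpow_nonneg (hsupp_nonneg k i) p)
  intro hb
  obtain ⟨M, hM⟩ := hb
  have hMk : ∀ k, (∑ i, α i * (suppF (P k) (u i)) ^ p) ≤ M := fun k =>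
    hM (Set.mem_range_self k)
  have hM0 : 0 ≤ M :=
    le_trans (Finset.sum_nonneg fun i _ => hterm 0 i) (hMk 0)
  set a : ℝ := Finset.univ.inf' hne α with ha
  have ha0 : 0 < a := (Finset.lt_inf'_iff hne).2 fun i _ => hα i
  -- choose k with large circumradius
  rw [not_bddAbove_iff] at hR
  obtain ⟨y, ⟨k, rfl⟩, hk⟩ := hR (max (c⁻¹ * (M / a) ^ p⁻¹) 0)
  set R := circumRadius (P k) with hRdef
  have hRpos : 0 < R := lt_of_le_of_lt (le_max_right _ _) hk
  -- circumradius attained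
  have himg : IsCompact ((fun x => ‖x‖) '' P k) := (hcomp k).image continuous_norm
  have hnonempty : ((fun x => ‖x‖) '' P k).Nonempty := ⟨‖(0 : EuclideanSpace ℝ (Fin n))‖, 0, ho k, rfl⟩
  have hmem : R ∈ (fun x => ‖x‖) '' P k := himg.sSup_mem hnonempty
  obtain ⟨x, hxP, hxR⟩ := hmem
  have hxR' : ‖x‖ = R := hxR
  obtain ⟨i, hix⟩ := hcx x
  rw [hxR'] at hix
  have hhi : c * R ≤ suppF (P k) (u i) := hix.trans (hsupp_le k x hxP i)
  -- key inequality chain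
  have h1 : (M / a) ^ p⁻¹ < c * R := by
    have : c⁻¹ * (M / a) ^ p⁻¹ < R := lt_of_le_of_lt (le_max_left _ _) hk
    calc (M / a) ^ p⁻¹ = c * (c⁻¹ * (M / a) ^ p⁻¹) := by field_simp
      _ < c * R := by nlinarith
  have hMa0 : 0 ≤ M / a := div_nonneg hM0 ha0.le
  have h2 : M / a < (c * R) ^ p := by
    have := Real.rpow_lt_rpow (Real.rpow_nonneg hMa0 p⁻¹) h1 hp0
    rwa [Real.rpow_inv_rpow hMa0 hp0.ne'] at this
  have h3 : (c * R) ^ p ≤ (suppF (P k) (u i)) ^ p :=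
    Real.rpow_le_rpow (by positivity) hhi hp0.le
  have h4 : M < α i * (suppF (P k) (u i)) ^ p := by
    have hai : a ≤ α i := Finset.inf'_le _ (Finset.mem_univ i)
    have : M = a * (M / a) := by field_simp
    rw [this]
    calc a * (M / a) < a * (c * R) ^ p := by nlinarith
      _ ≤ α i * (suppF (P k) (u i)) ^ p := by nlinarith [Real.rpow_nonneg (mul_nonneg hc.le hRpos.le) p]
  have h5 : α i * (suppF (P k) (u i)) ^ p ≤ ∑ j, α j * (suppF (P k) (u j)) ^ p :=
    Finset.single_le_sum (fun j _ => hterm k j) (Finset.mem_univ i)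
  exact absurd (hMk k) (not_le.2 (h4.trans_le h5))
end
end

section
/- Let 0 < p < 1, let α_1,…,α_N be positive real numbers, let u_1,…,u_N (N ≥ n+1) be unit vectors in ℝ^n not concentrated on a closed hemisphere, and let P ∈ P(u_1,…,u_N) be a polytope such that the origin o lies in the interior of P and o is the point of P maximizing Φ_P(ξ) = Σ_{k=1}^N α_k (h(P,u_k) − ξ·u_k)^p over ξ ∈ P. Then Σ_{k=1}^N α_k h(P,u_k)^{p−1} u_k = 0. -/
open MeasureTheory Set
open scoped RealInnerProductSpace

noncomputable section

/-- Auxiliary: positivity of the support function when the origin is interior. -/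
theorem suppF_pos_aux {n : ℕ} (P : Set (EuclideanSpace ℝ (Fin n))) (hc : IsCompact P)
    (u : EuclideanSpace ℝ (Fin n)) (hu : ‖u‖ = 1)
    (ho : (0 : EuclideanSpace ℝ (Fin n)) ∈ interior P) : 0 < suppF P u := by
  obtain ⟨ε, hε, hball⟩ := Metric.mem_nhds_iff.1 (mem_interior_iff_mem_nhds.1 ho)
  have hx : (ε/2) • u ∈ P := by
    apply hball
    simp [norm_smul, hu, abs_of_pos hε]
    linarith
  have hval : ⟪(ε/2) • u, u⟫ = ε/2 := by
    rw [real_inner_smul_left, real_inner_self_eq_norm_sq, hu]; ring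
  have hb : BddAbove ((fun x => ⟪x, u⟫) '' P) :=
    (hc.image (continuous_id.inner continuous_const)).bddAbove
  have := le_csSup hb (mem_image_of_mem (fun x => ⟪x, u⟫) hx)
  rw [hval] at this
  unfold suppF
  linarith

/-- First-order condition at an interior maximizer of Φ_P located at the origin:
Σ α_k h(P,u_k)^{p-1} u_k = 0 (Equation (4.4)). -/
theorem first_order_condition_at_origin
    {n N : ℕ} (hn : 2 ≤ n) (hN : n + 1 ≤ N)
    (p : ℝ) (hp0 : 0 < p) (hp1 : p < 1)
    (α : Fin N → ℝ) (hα : ∀ k, 0 < α k)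
    (u : Fin N → EuclideanSpace ℝ (Fin n)) (hu : ∀ k, ‖u k‖ = 1)
    (hhem : NotOnClosedHemisphere u)
    (P : Set (EuclideanSpace ℝ (Fin n))) (hP : InPolyClass u P)
    (ho : (0 : EuclideanSpace ℝ (Fin n)) ∈ interior P)
    (hmax : IsMaxOn (Phi α u p P) P 0) :
    ∑ k, (α k * (suppF P (u k)) ^ (p - 1)) • u k = 0 := by
  have hc : IsCompact P := by
    obtain ⟨⟨S, hS, -⟩, -⟩ := hP
    rw [hS]
    exact S.finite_toSet.isCompact_convexHull (𝕜 := ℝ)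
  have hpos : ∀ k, 0 < suppF P (u k) := fun k => suppF_pos_aux P hc (u k) (hu k) ho
  set L : EuclideanSpace ℝ (Fin n) →L[ℝ] ℝ :=
    ∑ k, α k • ((p * suppF P (u k) ^ (p - 1)) • (-(innerSL ℝ (u k)))) with hL
  have hΦ : HasFDerivAt (Phi α u p P) L 0 := by
    unfold Phi
    apply HasFDerivAt.fun_sum
    intro k _
    have hg : HasFDerivAt (fun ξ : EuclideanSpace ℝ (Fin n) => suppF P (u k) - ⟪ξ, u k⟫)
        (-(innerSL ℝ (u k))) 0 := by
      have heq : (fun ξ : EuclideanSpace ℝ (Fin n) => suppF P (u k) - ⟪ξ, u k⟫)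
          = fun ξ => suppF P (u k) - (innerSL ℝ (u k)) ξ := by
        funext ξ; rw [innerSL_apply_apply, real_inner_comm]
      rw [heq]
      simpa using (hasFDerivAt_const (suppF P (u k)) (0 : EuclideanSpace ℝ (Fin n))).fun_sub
        (innerSL ℝ (u k)).hasFDerivAt
    have hr : HasDerivAt (fun x : ℝ => x ^ p) (p * suppF P (u k) ^ (p - 1))
        (suppF P (u k) - ⟪(0 : EuclideanSpace ℝ (Fin n)), u k⟫) := by
      have h0 : (suppF P (u k) - ⟪(0 : EuclideanSpace ℝ (Fin n)), u k⟫) = suppF P (u k) := by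
        simp
      rw [h0]
      exact Real.hasDerivAt_rpow_const (Or.inl (hpos k).ne')
    exact (hr.comp_hasFDerivAt 0 hg).const_mul (α k)
  have hloc : IsLocalMax (Phi α u p P) 0 :=
    hmax.isLocalMax (mem_interior_iff_mem_nhds.1 ho)
  have hL0 : L = 0 := hloc.hasFDerivAt_eq_zero hΦ
  set S : EuclideanSpace ℝ (Fin n) := ∑ k, (α k * suppF P (u k) ^ (p - 1)) • u k with hS
  have hLS : L S = 0 := by rw [hL0]; rfl
  have hinner : ⟪S, S⟫ = ∑ k, (α k * suppF P (u k) ^ (p - 1)) * ⟪u k, S⟫ := by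
    rw [hS, sum_inner]
    exact Finset.sum_congr rfl fun k _ => by rw [inner_smul_left]; simp
  have hexp : L S = ∑ k, α k * ((p * suppF P (u k) ^ (p - 1)) * (-⟪u k, S⟫)) := by
    rw [hL]
    simp [ContinuousLinearMap.sum_apply, mul_comm]
  have key : p * ⟪S, S⟫ = 0 := by
    have h1 : p * ⟪S, S⟫ = -(L S) := by
      rw [hexp, hinner, Finset.mul_sum, ← Finset.sum_neg_distrib]
      exact Finset.sum_congr rfl fun k _ => by ring
    rw [h1, hLS, neg_zero]
  have hz : ⟪S, S⟫ = (0:ℝ) := by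
    rcases mul_eq_zero.1 key with h1 | h1
    · exact absurd h1 hp0.ne'
    · exact h1
  exact inner_self_eq_zero.1 hz
end
end
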